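/- For a T0 space X, the following are equivalent: (1) X is a strong d-space; (2) for every directed subset D of X, every nonempty finite subset F of X, and every open set U, if ⋂_{d∈D} ↑d ∩ ↑F ⊆ U then ↑d ∩ ↑F ⊆ U for some d ∈ D. -/

import Mathlib

open Set

universe u

variable {α : Type u}

/-- The specialization order used in the paper: `x ≤ y` iff `x ∈ closure {y}`. -/
def specLE [TopologicalSpace α] (x y : α) : Prop := x ∈ closure ({y} : Set α)

/-- `↑x = {y | x ≤ y}` in the specialization order. -/
def upOf [TopologicalSpace α] (x : α) : Set α := {y | specLE x y}

/-- `↑F = {y | ∃ a ∈ F, a ≤ y}` in the specialization order. -/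
def upSetOf [TopologicalSpace α] (F : Set α) : Set α := {y | ∃ a ∈ F, specLE a y}

/-- `↓B = {x | ∃ b ∈ B, x ≤ b}` in the specialization order. -/
def downOf [TopologicalSpace α] (B : Set α) : Set α := {x | ∃ b ∈ B, specLE x b}

/-- A set directed with respect to the specialization order: nonempty, and any two
elements have an upper bound in it. -/
def SDirected [TopologicalSpace α] (D : Set α) : Prop :=
  D.Nonempty ∧ ∀ a ∈ D, ∀ b ∈ D, ∃ c ∈ D, specLE a c ∧ specLE b c

/-- `s` is a supremum (least upper bound) of `D` in the specialization order. -/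
def SIsSup [TopologicalSpace α] (D : Set α) (s : α) : Prop :=
  (∀ d ∈ D, specLE d s) ∧ ∀ t : α, (∀ d ∈ D, specLE d t) → specLE s t

/-- Upper set (= saturated set) in the specialization order. -/
def SUpper [TopologicalSpace α] (A : Set α) : Prop :=
  ∀ ⦃x y : α⦄, x ∈ A → specLE x y → y ∈ A

/-- Scott open set with respect to the specialization order. -/
def SScottOpen [TopologicalSpace α] (U : Set α) : Prop :=
  SUpper U ∧ ∀ D : Set α, SDirected D → ∀ s : α, SIsSup D s → s ∈ U → (D ∩ U).Nonempty

/-- A d-space: a dcpo under the specialization order, all open sets Scott open. -/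
def IsDSpace (α : Type u) [TopologicalSpace α] : Prop :=
  (∀ D : Set α, SDirected D → ∃ s : α, SIsSup D s) ∧
    ∀ U : Set α, IsOpen U → SScottOpen U

/-- Member of `K(X)`: nonempty, compact and saturated. -/
def IsKSet [TopologicalSpace α] (K : Set α) : Prop :=
  K.Nonempty ∧ IsCompact K ∧ SUpper K

/-- A filtered family of sets: nonempty, and any two members contain a common member. -/
def FilteredFam (𝒦 : Set (Set α)) : Prop :=
  𝒦.Nonempty ∧ ∀ K1 ∈ 𝒦, ∀ K2 ∈ 𝒦, ∃ K3 ∈ 𝒦, K3 ⊆ K1 ∩ K2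

/-- Well-filtered space: for every filtered family of nonempty compact saturated sets whose
intersection is contained in an open `U`, some member is contained in `U`. -/
def IsWellFiltered (α : Type u) [TopologicalSpace α] : Prop :=
  ∀ 𝒦 : Set (Set α), (∀ K ∈ 𝒦, IsKSet K) → FilteredFam 𝒦 →
    ∀ U : Set α, IsOpen U → ⋂₀ 𝒦 ⊆ U → ∃ K ∈ 𝒦, K ⊆ U

/-- Rudin set: a nonempty set `A` such that for some filtered family `𝒦 ⊆ K(X)`,
`closure A` is a minimal closed set meeting every member of `𝒦`. -/
def IsRudin [TopologicalSpace α] (A : Set α) : Prop :=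
  A.Nonempty ∧ ∃ 𝒦 : Set (Set α), (∀ K ∈ 𝒦, IsKSet K) ∧ FilteredFam 𝒦 ∧
    (∀ K ∈ 𝒦, (closure A ∩ K).Nonempty) ∧
    ∀ B : Set α, IsClosed B → B ⊆ closure A → (∀ K ∈ 𝒦, (B ∩ K).Nonempty) → B = closure A

/-- Well-filtered determined set: every continuous map into a well-filtered T0 space sends it
to a set whose closure is the closure of a unique point. -/
def IsWFD [TopologicalSpace α] (A : Set α) : Prop :=
  ∀ (Y : Type u) [TopologicalSpace Y] [T0Space Y], IsWellFiltered Y →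
    ∀ f : α → Y, Continuous f → ∃! y : Y, closure (f '' A) = closure ({y} : Set Y)

/-- Irreducible set. -/
def IsIrred [TopologicalSpace α] (A : Set α) : Prop :=
  A.Nonempty ∧ ∀ F1 F2 : Set α, IsClosed F1 → IsClosed F2 → A ⊆ F1 ∪ F2 → A ⊆ F1 ∨ A ⊆ F2

/-- Sober space: every irreducible closed set is the closure of a unique point. -/
def IsSober (α : Type u) [TopologicalSpace α] : Prop :=
  ∀ A : Set α, IsClosed A → IsIrred A → ∃! x : α, A = closure ({x} : Set α)

/-- `A` has a maximal element with respect to the specialization order. -/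
def HasMaxElem [TopologicalSpace α] (A : Set α) : Prop :=
  ∃ m ∈ A, ∀ a ∈ A, specLE m a → a = m

/-- Strong d-space. -/
def IsStrongDSpace (α : Type u) [TopologicalSpace α] : Prop :=
  ∀ D : Set α, SDirected D → ∀ x : α, ∀ U : Set α, IsOpen U →
    (⋂ d ∈ D, upOf d) ∩ upOf x ⊆ U → ∃ d ∈ D, upOf d ∩ upOf x ⊆ U

lemma specLE_trans' [TopologicalSpace α] {x y z : α} (h1 : specLE x y) (h2 : specLE y z) :
    specLE x z := by
  have h : closure ({y} : Set α) ⊆ closure {z} :=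
    closure_minimal (Set.singleton_subset_iff.2 h2) isClosed_closure
  exact h h1

lemma upOf_mono' [TopologicalSpace α] {a b : α} (h : specLE a b) : upOf b ⊆ upOf a :=
  fun _ hy => specLE_trans' h hy

/-- strong d-spaces via finite sets. -/
theorem stmt_15 (α : Type u) [TopologicalSpace α] [T0Space α] :
    IsStrongDSpace α ↔
      ∀ D : Set α, SDirected D → ∀ F : Set α, F.Finite → F.Nonempty →
        ∀ U : Set α, IsOpen U → (⋂ d ∈ D, upOf d) ∩ upSetOf F ⊆ U →
          ∃ d ∈ D, upOf d ∩ upSetOf F ⊆ U := by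
  constructor
  · intro hs D hD F hFfin hFne U hU hsub
    have hup : ∀ a ∈ F, upOf a ⊆ upSetOf F := fun a ha y hy => ⟨a, ha, hy⟩
    obtain ⟨d, hd, hdall⟩ : ∃ d ∈ D, ∀ a ∈ F, upOf d ∩ upOf a ⊆ U := by
      refine Set.Finite.induction_on_subset (motive := fun t _ => ∃ d ∈ D, ∀ a ∈ t, upOf d ∩ upOf a ⊆ U) F hFfin ?_ ?_
      · obtain ⟨d0, hd0⟩ := hD.1
        exact ⟨d0, hd0, fun a ha => absurd ha (Set.notMem_empty a)⟩
      · intro a G haF _ _ ih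
        obtain ⟨d, hd, hdall⟩ := ih
        have hsub_a : (⋂ d ∈ D, upOf d) ∩ upOf a ⊆ U := by
          intro y hy
          exact hsub ⟨hy.1, hup a haF hy.2⟩
        obtain ⟨da, hda, hdaU⟩ := hs D hD a U hU hsub_a
        obtain ⟨c, hc, hdc, hdac⟩ := hD.2 d hd da hda
        refine ⟨c, hc, ?_⟩
        intro b hb y hy
        rcases hb with rfl | hb
        · exact hdaU ⟨upOf_mono' hdac hy.1, hy.2⟩
        · exact hdall b hb ⟨upOf_mono' hdc hy.1, hy.2⟩
    refine ⟨d, hd, ?_⟩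
    rintro y ⟨hy1, a, ha, hay⟩
    exact hdall a ha ⟨hy1, hay⟩
  · intro h D hD x U hU hsub
    have heq : upSetOf ({x} : Set α) = upOf x := by
      ext y
      simp [upSetOf, upOf]
    obtain ⟨d, hd, hdU⟩ := h D hD {x} (Set.finite_singleton x) (Set.singleton_nonempty x)
      U hU (by rw [heq]; exact hsub)
    exact ⟨d, hd, by rwa [heq] at hdU⟩
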